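/- Let (Ω', 𝒜, P) be a probability space, B > 0, K > 0, and let L : Ω' → ℝ be a random variable with 0 ≤ L ≤ B almost surely, and Δ : Ω' → ℝ with 0 ≤ Δ ≤ K·L almost surely. Let α, β ∈ (0,1) and γ > 0, and let L₁, …, Lₙ be n i.i.d. copies of L. If n ≥ 2·K²·B²·log(1/β)/(α²·γ²), then with probability at least 1 − β over the samples, the following implication holds: if the empirical mean (1/n)∑_{i=1}^n Lᵢ ≤ α·γ/(2K), then P(Δ > γ) ≤ α. -/

import Mathlib

open MeasureTheory ProbabilityTheory

lemma hoeff_core (p u : ℝ) (hp0 : 0 ≤ p) (hp1 : p ≤ 1) :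
    1 - p + p * Real.exp u ≤ Real.exp (p * u + u ^ 2 / 8) := by
  have hD : ∀ v : ℝ, 0 < 1 - p + p * Real.exp v := by
    intro v
    rcases eq_or_lt_of_le hp0 with h | h
    · simp [← h]
    · nlinarith [Real.exp_pos v]
  set f : ℝ → ℝ := fun v => p * v + v ^ 2 / 8 - Real.log (1 - p + p * Real.exp v) with hf
  set g : ℝ → ℝ := fun v => p + v / 4 - p * Real.exp v / (1 - p + p * Real.exp v) with hg
  have hDd : ∀ v : ℝ, HasDerivAt (fun w => 1 - p + p * Real.exp w) (p * Real.exp v) v := by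
    intro v
    simpa using ((Real.hasDerivAt_exp v).const_mul p).const_add (1 - p)
  have hfd : ∀ v, HasDerivAt f (g v) v := by
    intro v
    have hlog : HasDerivAt (fun w => Real.log (1 - p + p * Real.exp w))
        (p * Real.exp v / (1 - p + p * Real.exp v)) v := (hDd v).log (hD v).ne'
    have h1 : HasDerivAt (fun w : ℝ => p * w + w ^ 2 / 8) (p + v / 4) v := by
      have := ((hasDerivAt_id v).const_mul p).add ((hasDerivAt_pow 2 v).div_const 8)
      refine this.congr_deriv ?_
      rw [show (2:ℕ) - 1 = 1 from rfl]; ring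
    exact h1.sub hlog
  have hgd : ∀ v, HasDerivAt g
      (1/4 - (p * Real.exp v * (1 - p + p * Real.exp v)
        - p * Real.exp v * (p * Real.exp v)) / (1 - p + p * Real.exp v) ^ 2) v := by
    intro v
    have hq := ((Real.hasDerivAt_exp v).const_mul p).div (hDd v) (hD v).ne'
    have h1 : HasDerivAt (fun w : ℝ => p + w / 4) (1/4) v := by
      simpa using ((hasDerivAt_id v).div_const 4).const_add p
    exact h1.sub hq
  have hgmono : Monotone g := by
    refine monotone_of_hasDerivAt_nonneg (f' := fun v =>
      (1/4 - (p * Real.exp v * (1 - p + p * Real.exp v)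
        - p * Real.exp v * (p * Real.exp v)) / (1 - p + p * Real.exp v) ^ 2)) hgd ?_
    intro v
    have hDv := hD v
    have hE := Real.exp_pos v
    rw [Pi.zero_apply, sub_nonneg, div_le_iff₀ (by positivity)]
    nlinarith [sq_nonneg (1 - p - p * Real.exp v)]
  have hg0 : g 0 = 0 := by
    simp [hg]
  have hf0 : f 0 = 0 := by
    simp [hf]
  have hfnonneg : 0 ≤ f u := by
    rcases le_total 0 u with hu | hu
    · have hmono : MonotoneOn f (Set.Ici 0) := by
        refine monotoneOn_of_deriv_nonneg (convex_Ici 0)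
          (fun v _ => ((hfd v).differentiableAt).continuousAt.continuousWithinAt)
          (fun v _ => ((hfd v).differentiableAt).differentiableWithinAt) ?_
        intro v hv
        rw [interior_Ici] at hv
        rw [(hfd v).deriv]
        rw [← hg0]
        exact hgmono (le_of_lt hv)
      have := hmono (Set.self_mem_Ici) (Set.mem_Ici.mpr hu) hu
      rwa [hf0] at this
    · have hmono : AntitoneOn f (Set.Iic 0) := by
        refine antitoneOn_of_deriv_nonpos (convex_Iic 0)
          (fun v _ => ((hfd v).differentiableAt).continuousAt.continuousWithinAt)
          (fun v _ => ((hfd v).differentiableAt).differentiableWithinAt) ?_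
        intro v hv
        rw [interior_Iic] at hv
        rw [(hfd v).deriv]
        rw [← hg0]
        exact hgmono (le_of_lt hv)
      have := hmono (Set.mem_Iic.mpr hu) (Set.self_mem_Iic) hu
      rwa [hf0] at this
  have hlog : Real.log (1 - p + p * Real.exp u) ≤ p * u + u ^ 2 / 8 := by
    simp only [hf] at hfnonneg
    linarith
  exact (Real.log_le_iff_le_exp (hD u)).mp hlog

lemma hoeff_integrable_exp {Ω : Type*} [MeasurableSpace Ω] {μ : Measure Ω}
    [IsProbabilityMeasure μ] {L : Ω → ℝ} (hL : Measurable L) {B : ℝ}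
    (h0 : ∀ᵐ ω ∂μ, 0 ≤ L ω) (hB' : ∀ᵐ ω ∂μ, L ω ≤ B) (s : ℝ) :
    Integrable (fun ω => Real.exp (s * L ω)) μ := by
  refine Integrable.mono' (integrable_const (Real.exp (|s| * B)))
    ((hL.const_mul s).exp.aestronglyMeasurable) ?_
  filter_upwards [h0, hB'] with ω h1 h2
  rw [Real.norm_eq_abs, abs_of_pos (Real.exp_pos _), Real.exp_le_exp]
  calc s * L ω ≤ |s| * L ω := mul_le_mul_of_nonneg_right (le_abs_self s) h1
    _ ≤ |s| * B := mul_le_mul_of_nonneg_left h2 (abs_nonneg s)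

lemma hoeff_integrable {Ω : Type*} [MeasurableSpace Ω] {μ : Measure Ω}
    [IsProbabilityMeasure μ] {L : Ω → ℝ} (hL : Measurable L) {B : ℝ}
    (h0 : ∀ᵐ ω ∂μ, 0 ≤ L ω) (hB' : ∀ᵐ ω ∂μ, L ω ≤ B) :
    Integrable L μ := by
  refine Integrable.mono' (integrable_const B) hL.aestronglyMeasurable ?_
  filter_upwards [h0, hB'] with ω h1 h2
  rw [Real.norm_eq_abs, abs_of_nonneg h1]; exact h2

lemma hoeff_mgf {Ω : Type*} [MeasurableSpace Ω] {μ : Measure Ω}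
    [IsProbabilityMeasure μ] {L : Ω → ℝ} (hL : Measurable L) {B : ℝ} (hB : 0 < B)
    (h0 : ∀ᵐ ω ∂μ, 0 ≤ L ω) (hB' : ∀ᵐ ω ∂μ, L ω ≤ B) (s : ℝ) :
    mgf L μ s ≤ Real.exp (s * (∫ ω, L ω ∂μ) + s ^ 2 * B ^ 2 / 8) := by
  set m := ∫ ω, L ω ∂μ with hm
  have hint : Integrable L μ := hoeff_integrable hL h0 hB'
  have hm0 : 0 ≤ m := integral_nonneg_of_ae h0
  have hmB : m ≤ B := by
    have := integral_mono_ae hint (integrable_const B) hB'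
    simpa using this
  have hpt : ∀ᵐ ω ∂μ, Real.exp (s * L ω)
      ≤ 1 - L ω / B + L ω / B * Real.exp (s * B) := by
    filter_upwards [h0, hB'] with ω h1 h2
    have ha : (0:ℝ) ≤ 1 - L ω / B := by
      rw [sub_nonneg, div_le_one hB]; exact h2
    have hb : (0:ℝ) ≤ L ω / B := div_nonneg h1 hB.le
    have hab : (1 - L ω / B) + L ω / B = 1 := by ring
    have key := convexOn_exp.2 (Set.mem_univ (0:ℝ)) (Set.mem_univ (s * B)) ha hb hab
    have harg : (1 - L ω / B) • (0:ℝ) + (L ω / B) • (s * B) = s * L ω := by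
      simp only [smul_eq_mul]
      field_simp
      ring
    rw [harg] at key
    simpa [Real.exp_zero, smul_eq_mul] using key
  have hintRHS : Integrable (fun ω => 1 - L ω / B + L ω / B * Real.exp (s * B)) μ :=
    ((integrable_const (1:ℝ)).sub (hint.div_const B)).add
      ((hint.div_const B).mul_const _)
  have h1 : mgf L μ s ≤ 1 - m / B + m / B * Real.exp (s * B) := by
    have := integral_mono_ae (hoeff_integrable_exp hL h0 hB' s) hintRHS hpt
    refine le_trans this (le_of_eq ?_)
    have hA : Integrable (fun ω => 1 - L ω / B) μ :=
      (integrable_const (1:ℝ)).sub (hint.div_const B)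
    have hBint : Integrable (fun ω => L ω / B * Real.exp (s * B)) μ :=
      (hint.div_const B).mul_const _
    rw [integral_add (f := fun ω => 1 - L ω / B)
        (g := fun ω => L ω / B * Real.exp (s * B)) hA hBint,
      integral_sub (f := fun _ => (1:ℝ)) (g := fun ω => L ω / B)
        (integrable_const (1:ℝ)) (hint.div_const B),
      integral_const, integral_mul_const, integral_div]
    simp [hm]
  refine h1.trans ?_
  have := hoeff_core (m / B) (s * B) (div_nonneg hm0 hB.le)
    ((div_le_one hB).mpr hmB)
  refine this.trans (le_of_eq ?_)
  congr 1
  field_simp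

/-- Generalization certificate: if `0 ≤ L ≤ B` and `0 ≤ Δ ≤ K·L` almost surely,
and `L₁, …, Lₙ` are i.i.d. copies of `L` with
`n ≥ 2K²B²log(1/β)/(α²γ²)`, then with probability at least `1 - β` over the
samples, the implication "empirical mean `≤ αγ/(2K)` implies `P(Δ > γ) ≤ α`"
holds. -/
theorem empirical_loss_generalization_certificate
    (Ω' : Type*) [MeasurableSpace Ω'] (P : Measure Ω') [IsProbabilityMeasure P]
    (L Δ : Ω' → ℝ) (hLmeas : Measurable L) (hΔmeas : Measurable Δ)
    (B K : ℝ) (hB : 0 < B) (hK : 0 < K)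
    (hL0 : ∀ᵐ ω ∂P, 0 ≤ L ω) (hLB : ∀ᵐ ω ∂P, L ω ≤ B)
    (hΔ0 : ∀ᵐ ω ∂P, 0 ≤ Δ ω) (hΔL : ∀ᵐ ω ∂P, Δ ω ≤ K * L ω)
    (α β γ : ℝ) (hα : α ∈ Set.Ioo (0 : ℝ) 1) (hβ : β ∈ Set.Ioo (0 : ℝ) 1)
    (hγ : 0 < γ)
    (Ω'' : Type*) [MeasurableSpace Ω''] (ν : Measure Ω'') [IsProbabilityMeasure ν]
    (n : ℕ) (Ls : Fin n → Ω'' → ℝ) (hLsmeas : ∀ i, Measurable (Ls i))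
    (hiid : iIndepFun Ls ν)
    (hdist : ∀ i, ν.map (Ls i) = P.map L)
    (hn : (n : ℝ) ≥ 2 * K ^ 2 * B ^ 2 * Real.log (1 / β) / (α ^ 2 * γ ^ 2)) :
    (ν {ω | (1 / (n : ℝ)) * ∑ i, Ls i ω ≤ α * γ / (2 * K) →
        (P {ω' | Δ ω' > γ}).toReal ≤ α}).toReal ≥ 1 - β := by
  obtain ⟨hα0, hα1⟩ := hα
  obtain ⟨hβ0, hβ1⟩ := hβ
  by_cases hPΔ : (P {ω' | Δ ω' > γ}).toReal ≤ α
  · have hEq : {ω | (1 / (n : ℝ)) * ∑ i, Ls i ω ≤ α * γ / (2 * K) →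
        (P {ω' | Δ ω' > γ}).toReal ≤ α} = Set.univ :=
      Set.eq_univ_of_forall (fun ω _ => hPΔ)
    rw [hEq, measure_univ, ENNReal.toReal_one]
    linarith
  -- main case : P(Δ > γ) > α, derive concentration
  push_neg at hPΔ
  set t : ℝ := α * γ / (2 * K) with hts
  have ht : 0 < t := by positivity
  set m : ℝ := ∫ ω, L ω ∂P with hm
  -- basic positivity facts
  have hLg : 0 < Real.log (1 / β) := by
    apply Real.log_pos
    rw [lt_div_iff₀ hβ0]
    linarith
  have hnpos : 0 < (n : ℝ) := by
    refine lt_of_lt_of_le ?_ hn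
    exact div_pos (mul_pos (by positivity) hLg) (by positivity)
  -- Markov : m > 2t
  have hLint : Integrable L P := hoeff_integrable hLmeas hL0 hLB
  have hΔint : Integrable Δ P := by
    refine Integrable.mono' (integrable_const (K * B)) hΔmeas.aestronglyMeasurable ?_
    filter_upwards [hΔ0, hΔL, hLB] with ω h1 h2 h3
    rw [Real.norm_eq_abs, abs_of_nonneg h1]
    calc Δ ω ≤ K * L ω := h2
      _ ≤ K * B := mul_le_mul_of_nonneg_left h3 hK.le
  have hmark : γ * (P {ω' | Δ ω' > γ}).toReal ≤ ∫ ω, Δ ω ∂P := by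
    have hsub : {ω' | Δ ω' > γ} ⊆ {ω' | γ ≤ Δ ω'} := by
      intro ω hω
      exact le_of_lt (show γ < Δ ω from hω)
    have h1 : (P {ω' | Δ ω' > γ}).toReal ≤ (P {ω' | γ ≤ Δ ω'}).toReal :=
      ENNReal.toReal_mono (measure_ne_top P _) (measure_mono hsub)
    have h2 := mul_meas_ge_le_integral_of_nonneg
      (hΔ0.mono fun ω h => h) hΔint γ
    calc γ * (P {ω' | Δ ω' > γ}).toReal ≤ γ * (P {ω' | γ ≤ Δ ω'}).toReal :=
          mul_le_mul_of_nonneg_left h1 hγ.le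
      _ ≤ ∫ ω, Δ ω ∂P := h2
  have hΔm : ∫ ω, Δ ω ∂P ≤ K * m := by
    have := integral_mono_ae hΔint (hLint.const_mul K) hΔL
    rwa [integral_const_mul] at this
  have hm2t : 2 * t ≤ m := by
    have h1 : α * γ < K * m := by
      calc α * γ < γ * (P {ω' | Δ ω' > γ}).toReal := by
            have := mul_lt_mul_of_pos_left hPΔ hγ
            linarith
        _ ≤ K * m := hmark.trans hΔm
    have h2 : t * (2 * K) = α * γ := by rw [hts]; field_simp
    have h3 : K * (2 * t) < K * m := by linarith
    exact le_of_lt ((mul_lt_mul_iff_right₀ hK).mp h3)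
  -- transfer distributional facts to ν
  have hPmem : ∀ᵐ ω ∂P, L ω ∈ Set.Icc (0 : ℝ) B := by
    filter_upwards [hL0, hLB] with ω h1 h2
    exact ⟨h1, h2⟩
  have hLsmem : ∀ i, ∀ᵐ ω ∂ν, Ls i ω ∈ Set.Icc (0 : ℝ) B := by
    intro i
    have h1 : ∀ᵐ x ∂(P.map L), x ∈ Set.Icc (0 : ℝ) B :=
      (ae_map_iff hLmeas.aemeasurable measurableSet_Icc).mpr hPmem
    rw [← hdist i] at h1
    exact (ae_map_iff (hLsmeas i).aemeasurable measurableSet_Icc).mp h1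
  have hLs0 : ∀ i, ∀ᵐ ω ∂ν, 0 ≤ Ls i ω := fun i => (hLsmem i).mono fun ω h => h.1
  have hLsB : ∀ i, ∀ᵐ ω ∂ν, Ls i ω ≤ B := fun i => (hLsmem i).mono fun ω h => h.2
  have hLsint : ∀ i, ∫ ω, Ls i ω ∂ν = m := by
    intro i
    calc ∫ ω, Ls i ω ∂ν = ∫ x, x ∂(ν.map (Ls i)) :=
          (integral_map (hLsmeas i).aemeasurable aestronglyMeasurable_id).symm
      _ = ∫ x, x ∂(P.map L) := by rw [hdist i]
      _ = m := integral_map hLmeas.aemeasurable aestronglyMeasurable_id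
  -- Chernoff bound with s = 4t/B^2
  set s : ℝ := 4 * t / B ^ 2 with hss
  have hs : 0 < s := by positivity
  have h_int : Integrable (fun ω => Real.exp ((-s) * (∑ i, Ls i) ω)) ν :=
    hiid.integrable_exp_mul_sum hLsmeas
      (fun i _ => hoeff_integrable_exp (hLsmeas i) (hLs0 i) (hLsB i) (-s))
  have hCh := measure_le_le_exp_mul_mgf (μ := ν) (X := ∑ i, Ls i) ((n : ℝ) * t)
    (neg_nonpos.mpr hs.le) h_int
  rw [hiid.mgf_sum hLsmeas Finset.univ] at hCh
  set E0 : ℝ := Real.exp ((-s) * m + (-s) ^ 2 * B ^ 2 / 8) with hE0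
  have hprod : ∏ i : Fin n, mgf (Ls i) ν (-s) ≤ E0 ^ n := by
    have h1 : ∀ i ∈ Finset.univ, mgf (Ls i) ν (-s) ≤ E0 := by
      intro i _
      have := hoeff_mgf (hLsmeas i) hB (hLs0 i) (hLsB i) (-s)
      rwa [hLsint i] at this
    calc ∏ i : Fin n, mgf (Ls i) ν (-s)
        ≤ ∏ _i : Fin n, E0 :=
          Finset.prod_le_prod (fun i _ => mgf_nonneg) h1
      _ = E0 ^ n := by rw [Finset.prod_const, Finset.card_univ, Fintype.card_fin]
  have htail : (ν {ω | (∑ i, Ls i) ω ≤ (n : ℝ) * t}).toReal ≤ β := by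
    have h2 : (ν {ω | (∑ i, Ls i) ω ≤ (n : ℝ) * t}).toReal
        ≤ Real.exp (-(-s) * ((n : ℝ) * t)) * E0 ^ n := by
      refine hCh.trans ?_
      exact mul_le_mul_of_nonneg_left hprod (Real.exp_pos _).le
    have h3 : Real.exp (-(-s) * ((n : ℝ) * t)) * E0 ^ n
        = Real.exp (s * ((n : ℝ) * t) + (n : ℝ) * ((-s) * m + (-s) ^ 2 * B ^ 2 / 8)) := by
      rw [hE0, ← Real.exp_nat_mul, ← Real.exp_add, neg_neg]
    have h4 : s * ((n : ℝ) * t) + (n : ℝ) * ((-s) * m + (-s) ^ 2 * B ^ 2 / 8)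
        ≤ Real.log β := by
      have hB2 : (0:ℝ) < B ^ 2 := by positivity
      have hst : s * t = 4 * t ^ 2 / B ^ 2 := by rw [hss]; ring
      have hsB : s ^ 2 * B ^ 2 / 8 = 2 * t ^ 2 / B ^ 2 := by
        rw [hss]; field_simp; ring
      have hsm : 8 * t ^ 2 / B ^ 2 ≤ s * m := by
        rw [hss]
        calc (8:ℝ) * t ^ 2 / B ^ 2 = 4 * t / B ^ 2 * (2 * t) := by ring
          _ ≤ 4 * t / B ^ 2 * m := by
            exact mul_le_mul_of_nonneg_left hm2t (by positivity)
      have key1 : s * ((n : ℝ) * t) + (n : ℝ) * ((-s) * m + (-s) ^ 2 * B ^ 2 / 8)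
          ≤ -((n : ℝ) * (2 * t ^ 2 / B ^ 2)) := by
        have h5 : (n : ℝ) * (8 * t ^ 2 / B ^ 2) ≤ (n : ℝ) * (s * m) :=
          mul_le_mul_of_nonneg_left hsm hnpos.le
        have h6 : s * ((n : ℝ) * t) = (n : ℝ) * (4 * t ^ 2 / B ^ 2) := by
          rw [← hst]; ring
        have h7 : (n : ℝ) * ((-s) * m + (-s) ^ 2 * B ^ 2 / 8)
            = -((n : ℝ) * (s * m)) + (n : ℝ) * (2 * t ^ 2 / B ^ 2) := by
          rw [show ((-s) ^ 2 * B ^ 2 / 8 : ℝ) = s ^ 2 * B ^ 2 / 8 by ring, hsB]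
          ring
        rw [h6, h7]
        have h8 : (n:ℝ) * (4 * t ^ 2 / B ^ 2) + (n:ℝ) * (2 * t ^ 2 / B ^ 2)
            + (n:ℝ) * (2 * t ^ 2 / B ^ 2) = (n:ℝ) * (8 * t ^ 2 / B ^ 2) := by ring
        linarith
      have key2 : Real.log (1 / β) ≤ (n : ℝ) * (2 * t ^ 2 / B ^ 2) := by
        have hαγ : (0:ℝ) < α ^ 2 * γ ^ 2 := by positivity
        have h8 : 2 * K ^ 2 * B ^ 2 * Real.log (1 / β) ≤ (n : ℝ) * (α ^ 2 * γ ^ 2) :=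
          (div_le_iff₀ hαγ).mp hn
        have h9 : (n : ℝ) * (2 * t ^ 2 / B ^ 2)
            = (n : ℝ) * (α ^ 2 * γ ^ 2) / (2 * K ^ 2 * B ^ 2) := by
          rw [hts]; field_simp
        rw [h9, le_div_iff₀ (by positivity)]
        linarith
      have h10 : Real.log (1 / β) = -Real.log β := by
        rw [one_div, Real.log_inv]
      linarith
    calc (ν {ω | (∑ i, Ls i) ω ≤ (n : ℝ) * t}).toReal
        ≤ Real.exp (s * ((n : ℝ) * t) + (n : ℝ) * ((-s) * m + (-s) ^ 2 * B ^ 2 / 8)) := by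
          rw [← h3]; exact h2
      _ ≤ Real.exp (Real.log β) := Real.exp_le_exp.mpr h4
      _ = β := Real.exp_log hβ0
  -- conclude
  set A : Set Ω'' := {ω | (∑ i, Ls i) ω ≤ (n : ℝ) * t} with hA
  have hAmeas : MeasurableSet A := by
    apply measurableSet_le _ measurable_const
    have : Measurable fun a => ∑ i : Fin n, Ls i a :=
      Finset.measurable_sum Finset.univ (fun i _ => hLsmeas i)
    rw [← Finset.sum_fn] at this
    exact this
  have hsub : Aᶜ ⊆ {ω | (1 / (n : ℝ)) * ∑ i, Ls i ω ≤ α * γ / (2 * K) →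
      (P {ω' | Δ ω' > γ}).toReal ≤ α} := by
    intro ω hω hle
    exfalso
    apply hω
    rw [hA, Set.mem_setOf_eq, Finset.sum_apply]
    rw [one_div, inv_mul_le_iff₀ hnpos] at hle
    exact hle
  have hcompl : (ν Aᶜ).toReal = 1 - (ν A).toReal := by
    rw [prob_compl_eq_one_sub hAmeas,
      ENNReal.toReal_sub_of_le prob_le_one ENNReal.one_ne_top, ENNReal.toReal_one]
  calc (ν {ω | (1 / (n : ℝ)) * ∑ i, Ls i ω ≤ α * γ / (2 * K) →
        (P {ω' | Δ ω' > γ}).toReal ≤ α}).toReal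
      ≥ (ν Aᶜ).toReal := ENNReal.toReal_mono (measure_ne_top ν _) (measure_mono hsub)
    _ = 1 - (ν A).toReal := hcompl
    _ ≥ 1 - β := by linarith [htail]
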